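/- In the torus-bundle setting, if a tensor field of the form K* (lift of a tensor from the base, vanishing on vertical vectors) is a conformal Killing tensor on (P,g) with associated 1-form P', then P' = 0, i.e. K* is actually a Killing tensor. In particular the torus bundle metric g admits no strict lifted conformal Killing tensors of this type. -/

import Mathlib

open scoped BigOperators

/-- An abstract model of the differential-geometric data on a manifold:
`F` plays the role of the ring of smooth functions (an `ℝ`-algebra),
`V` the `F`-module of vector fields, `D` the derivation action of vector
fields on functions, `bracket` the Lie bracket, `g` a Riemannian metric and
`conn` its Levi-Civita connection. -/
structure RiemSetup (F V : Type) [CommRing F] [Algebra ℝ F]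
    [AddCommGroup V] [Module F V] where
  D : V → F → F
  bracket : V → V → V
  g : V → V → F
  conn : V → V → V
  D_add : ∀ (X : V) (f₁ f₂ : F), D X (f₁ + f₂) = D X f₁ + D X f₂
  D_mul : ∀ (X : V) (f₁ f₂ : F), D X (f₁ * f₂) = D X f₁ * f₂ + f₁ * D X f₂
  D_const : ∀ (X : V) (r : ℝ), D X (algebraMap ℝ F r) = 0
  D_add_vec : ∀ (X Y : V) (f : F), D (X + Y) f = D X f + D Y f
  D_smul_vec : ∀ (f : F) (X : V) (f' : F), D (f • X) f' = f * D X f'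
  g_symm : ∀ X Y, g X Y = g Y X
  g_add_left : ∀ X Y Z, g (X + Y) Z = g X Z + g Y Z
  g_smul_left : ∀ (f : F) (X Y : V), g (f • X) Y = f * g X Y
  g_nondeg : ∀ Z, (∀ X, g X Z = 0) → Z = 0
  conn_add_left : ∀ X Y Z, conn (X + Y) Z = conn X Z + conn Y Z
  conn_smul_left : ∀ (f : F) (X Y : V), conn (f • X) Y = f • conn X Y
  conn_add_right : ∀ X Y Z, conn X (Y + Z) = conn X Y + conn X Z
  conn_leibniz : ∀ (X : V) (f : F) (Y : V), conn X (f • Y) = f • conn X Y + D X f • Y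
  compat : ∀ X Y Z, D X (g Y Z) = g (conn X Y) Z + g Y (conn X Z)
  torsion_free : ∀ X Y, conn X Y - conn Y X = bracket X Y

namespace RiemSetup

variable {F V : Type} [CommRing F] [Algebra ℝ F] [AddCommGroup V] [Module F V]

/-- The covariant derivative `(∇_X K)(Y,Z)` of a `(0,2)`-tensor `K`. -/
def nabla2 (S : RiemSetup F V) (K : V → V → F) (X Y Z : V) : F :=
  S.D X (K Y Z) - K (S.conn X Y) Z - K Y (S.conn X Z)

/-- The cyclic sum `𝒞_{X,Y,Z} (∇_X K)(Y,Z)`. -/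
def cyc (S : RiemSetup F V) (K : V → V → F) (X Y Z : V) : F :=
  S.nabla2 K X Y Z + S.nabla2 K Y Z X + S.nabla2 K Z X Y

/-- `K` is a conformal Killing tensor with associated 1-form `P`:
`(∇_X K)(X,X) = P(X) g(X,X)` for all `X`. -/
def IsConformalKillingWith (S : RiemSetup F V) (K : V → V → F) (P : V → F) : Prop :=
  ∀ X, S.nabla2 K X X X = P X * S.g X X

/-- A Killing tensor: vanishing cyclic sum of the covariant derivative. -/
def IsKillingTensor (S : RiemSetup F V) (K : V → V → F) : Prop :=
  ∀ X Y Z, S.cyc K X Y Z = 0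

/-- A Killing vector field: `L_ξ g = 0`. -/
def IsKillingField (S : RiemSetup F V) (ξ : V) : Prop :=
  ∀ X Y, S.D ξ (S.g X Y) = S.g (S.bracket ξ X) Y + S.g X (S.bracket ξ Y)

/-- Exterior differential of a 1-form. -/
def d1 (S : RiemSetup F V) (θ : V → F) (X Y : V) : F :=
  S.D X (θ Y) - S.D Y (θ X) - θ (S.bracket X Y)

/-- Lie derivative of a 1-form along a vector field. -/
def lie1 (S : RiemSetup F V) (ξ : V) (θ : V → F) (X : V) : F :=
  S.D ξ (θ X) - θ (S.bracket ξ X)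

/-- Covariant derivative `(∇_X φ)(Y)` of an `m`-form (given as an `m`-multilinear
alternating function of vector fields). -/
def nablaForm (S : RiemSetup F V) {m : ℕ} (φ : (Fin m → V) → F) (X : V)
    (Y : Fin m → V) : F :=
  S.D X (φ Y) - ∑ i, φ (Function.update Y i (S.conn X (Y i)))

/-- Interior product `X ⌟ φ`. -/
def inter {m : ℕ} (X : V) (φ : (Fin (m + 1) → V) → F) (Y : Fin m → V) : F :=
  φ (Fin.cons X Y)

/-- Wedge product `X♭ ∧ ψ` of the metric dual of `X` with an `m`-form `ψ`. -/
def wedge1 (S : RiemSetup F V) {m : ℕ} (X : V) (ψ : (Fin m → V) → F)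
    (Y : Fin (m + 1) → V) : F :=
  ∑ i : Fin (m + 1), (-1 : F) ^ (i : ℕ) * S.g X (Y i) * ψ (fun j => Y (i.succAbove j))

/-- Pointwise inner product of two `m`-forms, computed in an orthonormal frame `E`. -/
noncomputable def ipF {n m : ℕ} (E : Fin n → V) (φ ψ : (Fin m → V) → F) : F :=
  ((Nat.factorial m : ℝ)⁻¹) • ∑ f : Fin m → Fin n, φ (E ∘ f) * ψ (E ∘ f)

/-- Covariant derivative of a 2-form (as a bilinear function of vector fields). -/
def nabla2f (S : RiemSetup F V) (β : V → V → F) (X Y Z : V) : F :=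
  S.D X (β Y Z) - β (S.conn X Y) Z - β Y (S.conn X Z)

/-- Codifferential of a 2-form with respect to a frame `E`. -/
def codiff2 (S : RiemSetup F V) {m : ℕ} (E : Fin m → V) (β : V → V → F) (X : V) : F :=
  -∑ a, S.nabla2f β (E a) (E a) X

/-- Riemann curvature tensor `R(X,Y)Z`. -/
def curv (S : RiemSetup F V) (X Y Z : V) : V :=
  S.conn X (S.conn Y Z) - S.conn Y (S.conn X Z) - S.conn (S.bracket X Y) Z

/-- Ricci tensor, computed in an orthonormal frame `E`. -/
def ricci (S : RiemSetup F V) {N : ℕ} (E : Fin N → V) (X Y : V) : F :=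
  ∑ a, S.g (S.curv (E a) X Y) (E a)

end RiemSetup

open RiemSetup
/-- on the torus bundle, a lifted tensor `K*` (vanishing on
vertical vectors) which is conformal Killing with 1-form `P'` has `P' = 0`,
i.e. it is in fact a Killing tensor. -/
theorem lifted_conformal_killing_is_killing {F V : Type} [CommRing F]
    [Algebra ℝ F] [AddCommGroup V] [Module F V]
    (r : ℕ) (hr : 0 < r) (S : RiemSetup F V) (θ : Fin r → V → F) (ξ : Fin r → V)
    (b : Matrix (Fin r) (Fin r) ℝ) (hb : b.PosDef)
    (K : V → V → F) (P' : V → F)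
    (hgξ : ∀ i j, S.g (ξ i) (ξ j) = algebraMap ℝ F (b i j))
    -- vertical and horizontal vectors are orthogonal
    (hghor : ∀ i X, (∀ j, θ j X = 0) → S.g (ξ i) X = 0)
    (hconnξξ : ∀ i j, S.conn (ξ i) (ξ j) = 0)
    (hdec : ∀ X : V, ∃ (f : Fin r → F) (Xh : V),
      (∀ i, θ i Xh = 0) ∧ X = Xh + ∑ i, f i • ξ i)
    -- K* vanishes whenever one argument is vertical
    (hKvert : ∀ X Y, (∃ f : Fin r → F, X = ∑ i, f i • ξ i) →
      K X Y = 0 ∧ K Y X = 0)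
    (hP'add : ∀ X Y, P' (X + Y) = P' X + P' Y)
    (hP'smul : ∀ (f : F) X, P' (f • X) = f * P' X)
    -- the conformal Killing condition 𝒞∇K = 𝒞 P'·g
    (hconf : ∀ X Y Z, S.cyc K X Y Z
      = P' X * S.g Y Z + P' Y * S.g Z X + P' Z * S.g X Y) :
    ∀ X, P' X = 0 := by
  -- K vanishes when an argument is ξ j or 0
  have hKξ : ∀ (j : Fin r) (Y : V), K (ξ j) Y = 0 ∧ K Y (ξ j) = 0 := by
    intro j Y
    refine hKvert _ Y ⟨fun i => if i = j then 1 else 0, ?_⟩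
    simp [ite_smul]
  have hK0 : ∀ Y : V, K 0 Y = 0 ∧ K Y 0 = 0 := by
    intro Y
    refine hKvert _ Y ⟨0, ?_⟩
    simp
  have hD0 : ∀ X : V, S.D X 0 = 0 := by
    intro X
    have := S.D_const X 0
    simpa using this
  -- diagonal entries of b are positive
  have hbdiag : ∀ i, 0 < b i i := by
    intro i
    exact hb.diag_pos
  -- the cyclic sum vanishes whenever the last two arguments are ξ i
  have hcyc0 : ∀ (X : V) (i : Fin r), S.cyc K X (ξ i) (ξ i) = 0 := by
    intro X i
    simp [RiemSetup.cyc, RiemSetup.nabla2, (hKξ i _).1, (hKξ i _).2, hconnξξ,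
      (hK0 _).1, (hK0 _).2, hD0]
  -- cancel algebraMap of a nonzero real
  have hcancel : ∀ (c : ℝ) (x : F), c ≠ 0 → x * algebraMap ℝ F c = 0 → x = 0 := by
    intro c x hc hx
    have : x * algebraMap ℝ F c * algebraMap ℝ F c⁻¹ = 0 := by rw [hx]; ring
    rwa [mul_assoc, ← map_mul, mul_inv_cancel₀ hc, map_one, mul_one] at this
  -- P' vanishes on vertical fields
  have hp : ∀ i, P' (ξ i) = 0 := by
    intro i
    have h := hconf (ξ i) (ξ i) (ξ i)
    rw [hcyc0, hgξ] at h
    have h3 : P' (ξ i) * algebraMap ℝ F (3 * b i i) = 0 := by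
      rw [map_mul]
      have : (algebraMap ℝ F) 3 = (1 : F) + 1 + 1 := by
        rw [show (3 : ℝ) = 1 + 1 + 1 by norm_num, map_add, map_add, map_one]
      rw [this]
      linear_combination -h
    exact hcancel _ _ (by have := hbdiag i; positivity) h3
  -- P' vanishes everywhere
  intro X
  obtain ⟨i, _⟩ : ∃ i : Fin r, True := ⟨⟨0, hr⟩, trivial⟩
  have h := hconf X (ξ i) (ξ i)
  rw [hcyc0, hgξ, hp i] at h
  have h' : P' X * algebraMap ℝ F (b i i) = 0 := by linear_combination -h
  exact hcancel _ _ (ne_of_gt (hbdiag i)) h'
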